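/- Let T be a p2-tree with bipartition V(T) = X ∪ Y into a p2-set X and the independent [1,2]-set Y. Let x ∈ X be a vertex such that every neighbor y of x satisfies that N(y) \ {x} contains at most one leaf of T. Then the set S_x = (Y \ N(x)) ∪ L(x) ∪ {x} is an independent [1,2]-set of T containing x, where L(x) denotes the set of leaves of T at distance exactly two from x. -/

import Mathlib

/-- A set of vertices is independent: no two of its vertices are adjacent. -/
def IndepSet {V : Type*} (G : SimpleGraph V) (S : Set V) : Prop :=
  ∀ u ∈ S, ∀ w ∈ S, ¬ G.Adj u w

/-- An independent [1,2]-set: an independent set such that every vertex outside it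
has at least one and at most two neighbors in it. -/
def IsInd12Set {V : Type*} (G : SimpleGraph V) (S : Set V) : Prop :=
  IndepSet G S ∧
    ∀ u ∉ S, 1 ≤ (S ∩ G.neighborSet u).ncard ∧ (S ∩ G.neighborSet u).ncard ≤ 2

/-- A leaf: a vertex of degree 1. -/
def IsLeaf {V : Type*} (G : SimpleGraph V) (w : V) : Prop :=
  (G.neighborSet w).ncard = 1

/-- `T` is a p2-tree with bipartition `X ∪ Y`, where `X` is a p2-set:
`T` is a nontrivial tree, `X, Y` partition the vertex set, every edge joins `X` and `Y`,
and every vertex of `X` has degree at most 2. -/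
def IsP2Tree {V : Type*} (T : SimpleGraph V) (X Y : Set V) : Prop :=
  T.IsTree ∧ Nontrivial V ∧ X ∪ Y = Set.univ ∧ Disjoint X Y ∧
    (∀ a b : V, T.Adj a b → (a ∈ X ↔ b ∈ Y)) ∧
    ∀ x ∈ X, (T.neighborSet x).ncard ≤ 2

private lemma two_step {V : Type*} {T : SimpleGraph V} {x w : V} (hd : T.dist x w = 2) :
    ∃ a, T.Adj x a ∧ T.Adj a w := by
  have hne : T.dist x w ≠ 0 := by omega
  obtain ⟨p, hp⟩ := SimpleGraph.exists_walk_of_dist_ne_zero hne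
  rw [hd] at hp
  cases p with
  | nil => simp at hp
  | cons h1 q =>
    cases q with
    | nil => simp at hp
    | cons h2 r =>
      cases r with
      | nil => exact ⟨_, h1, h2⟩
      | cons h3 s => simp [SimpleGraph.Walk.length_cons] at hp

private lemma leaf_nbr {V : Type*} {T : SimpleGraph V} {w a : V} (hw : IsLeaf T w)
    (ha : T.Adj w a) : T.neighborSet w = {a} := by
  obtain ⟨b, hb⟩ := Set.ncard_eq_one.mp hw
  have : a ∈ T.neighborSet w := ha
  rw [hb] at this ⊢
  rw [Set.mem_singleton_iff] at this
  rw [this]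

theorem statement3 {V : Type*} [Fintype V] (T : SimpleGraph V) (X Y : Set V)
    (hp2 : IsP2Tree T X Y) (hY : IsInd12Set T Y) (x : V) (hx : x ∈ X)
    (hleaf : ∀ y ∈ T.neighborSet x,
      ({w | w ∈ T.neighborSet y ∧ w ≠ x ∧ IsLeaf T w}).ncard ≤ 1) :
    IsInd12Set T ((Y \ T.neighborSet x) ∪ {w | IsLeaf T w ∧ T.dist x w = 2} ∪ {x}) ∧
      x ∈ (Y \ T.neighborSet x) ∪ {w | IsLeaf T w ∧ T.dist x w = 2} ∪ {x} := by
  obtain ⟨htree, hnt, hunion, hdisj, hcross, hdeg⟩ := hp2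
  obtain ⟨hYind, hYcount⟩ := hY
  have hconn : T.Connected := htree.isConnected
  set B : Set V := {w | IsLeaf T w ∧ T.dist x w = 2} with hB
  set S : Set V := (Y \ T.neighborSet x) ∪ B ∪ {x} with hS
  have hmem : ∀ v : V, v ∉ X → v ∈ Y := by
    intro v hv
    have : v ∈ X ∪ Y := hunion ▸ Set.mem_univ v
    exact this.resolve_left hv
  have hXnY : ∀ v ∈ X, v ∉ Y := fun v hv hv' => Set.disjoint_left.mp hdisj hv hv'
  have hNxY : ∀ v, T.Adj x v → v ∈ Y := fun v h => (hcross x v h).mp hx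
  -- every member of B is a leaf whose unique neighbor is a neighbor of x
  have hBfact : ∀ w ∈ B, ∃ a, T.Adj x a ∧ T.neighborSet w = {a} := by
    intro w hw
    obtain ⟨a, hxa, haw⟩ := two_step hw.2
    exact ⟨a, hxa, leaf_nbr hw.1 haw.symm⟩
  have hBX : ∀ w ∈ B, w ∈ X := by
    intro w hw
    obtain ⟨a, hxa, hna⟩ := hBfact w hw
    have haw : T.Adj a w := by
      have : w ∈ T.neighborSet w → False := fun h => T.irrefl h
      have hmem : a ∈ T.neighborSet w := by rw [hna]; rfl
      exact hmem.symm
    by_contra hwX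
    exact hXnY a ((hcross a w haw).mpr (hmem w hwX)) (hNxY a hxa)
  have hxS : x ∈ S := Or.inr rfl
  refine ⟨⟨?_, ?_⟩, hxS⟩
  · -- independence
    rintro u hu w hw hadj
    rcases hu with (hu | hu) | hu <;> rcases hw with (hw | hw) | hw
    · exact hYind u hu.1 w hw.1 hadj
    · obtain ⟨a, hxa, hna⟩ := hBfact w hw
      have : u ∈ T.neighborSet w := hadj.symm
      rw [hna, Set.mem_singleton_iff] at this
      exact hu.2 (this ▸ hxa)
    · exact hu.2 (hw ▸ hadj).symm
    · obtain ⟨a, hxa, hna⟩ := hBfact u hu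
      have : w ∈ T.neighborSet u := hadj
      rw [hna, Set.mem_singleton_iff] at this
      exact hw.2 (this ▸ hxa)
    · exact hXnY w (hBX w hw) ((hcross u w hadj).mp (hBX u hu))
    · exact hXnY x hx ((hcross u x (hw ▸ hadj)).mp (hBX u hu))
    · exact hw.2 (hu ▸ hadj)
    · exact hXnY w (hBX w hw) ((hcross x w (hu ▸ hadj)).mp hx)
    · exact T.irrefl (hu ▸ hw ▸ hadj)
  · -- counting
    intro u hu
    simp only [hS, Set.mem_union, Set.mem_singleton_iff, not_or] at hu
    obtain ⟨⟨huA, huB⟩, hux⟩ := hu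
    by_cases huY : u ∈ Y
    · -- u ∈ Y, hence u ∈ N(x)
      have hux' : u ∈ T.neighborSet x := by
        by_contra h
        exact huA ⟨huY, h⟩
      have hxSN : x ∈ S ∩ T.neighborSet u :=
        ⟨hxS, (SimpleGraph.mem_neighborSet ..).mpr ((SimpleGraph.mem_neighborSet ..).mp hux').symm⟩
      constructor
      · have := (Set.ncard_pos (Set.toFinite _)).mpr ⟨x, hxSN⟩
        omega
      · have hsub : S ∩ T.neighborSet u ⊆
            insert x {w | w ∈ T.neighborSet u ∧ w ≠ x ∧ IsLeaf T w} := by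
          rintro v ⟨hvS, hvN⟩
          rcases hvS with (hv | hv) | hv
          · exact absurd hvN.symm (fun h => hYind u huY v hv.1 ((SimpleGraph.mem_neighborSet ..).mp hvN))
          · refine Set.mem_insert_iff.mpr (Or.inr ⟨hvN, ?_, hv.1⟩)
            intro h
            have h2 := hv.2
            rw [h, SimpleGraph.dist_self] at h2
            omega
          · exact Set.mem_insert_iff.mpr (Or.inl hv)
        calc (S ∩ T.neighborSet u).ncard
            ≤ (insert x {w | w ∈ T.neighborSet u ∧ w ≠ x ∧ IsLeaf T w}).ncard :=
              Set.ncard_le_ncard hsub (Set.toFinite _)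
          _ ≤ ({w | w ∈ T.neighborSet u ∧ w ≠ x ∧ IsLeaf T w}).ncard + 1 :=
              Set.ncard_insert_le _ _
          _ ≤ 2 := by have := hleaf u hux'; omega
    · -- u ∈ X
      have huX : u ∈ X := by
        by_contra h; exact huY (hmem u h)
      have hEq : S ∩ T.neighborSet u = T.neighborSet u \ T.neighborSet x := by
        ext v
        constructor
        · rintro ⟨hvS, hvN⟩
          rcases hvS with (hv | hv) | hv
          · exact ⟨hvN, hv.2⟩
          · obtain ⟨a, hxa, hna⟩ := hBfact v hv
            have : u ∈ T.neighborSet v := hvN.symm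
            rw [hna, Set.mem_singleton_iff] at this
            exact absurd (hNxY a hxa) (this ▸ huY)
          · rw [hv] at hvN
            exact absurd ((hcross u x hvN).mp huX) (hXnY x hx)
        · rintro ⟨hvN, hvNx⟩
          exact ⟨Or.inl (Or.inl ⟨(hcross u v hvN).mp huX, hvNx⟩), hvN⟩
      rw [hEq]
      have hnonempty : (T.neighborSet u \ T.neighborSet x).Nonempty := by
        by_contra hempty
        rw [Set.not_nonempty_iff_eq_empty, Set.diff_eq_empty] at hempty
        have h1 := (hYcount u (fun h => huY h)).1
        obtain ⟨y1, hy1⟩ := (Set.ncard_pos (Set.toFinite _)).mp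
          (by omega : 0 < (Y ∩ T.neighborSet u).ncard)
        have hy1x : y1 ∈ T.neighborSet x := hempty hy1.2
        -- N(u) = {y1}
        have hNu : T.neighborSet u = {y1} := by
          apply Set.eq_singleton_iff_unique_mem.mpr
          refine ⟨hy1.2, fun z hz => ?_⟩
          by_contra hne
          have hzx : z ∈ T.neighborSet x := hempty hz
          have hzu : T.Adj z u := hz.symm
          have hy1u : T.Adj y1 u := hy1.2.symm
          have hp1 : (SimpleGraph.Walk.cons hzx (SimpleGraph.Walk.cons hzu SimpleGraph.Walk.nil)).IsPath := by
            rw [SimpleGraph.Walk.isPath_def]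
            show [x, z, u].Nodup
            simp
            exact ⟨⟨hzx.ne, Ne.symm hux⟩, hzu.ne⟩
          have hp2 : (SimpleGraph.Walk.cons hy1x (SimpleGraph.Walk.cons hy1u SimpleGraph.Walk.nil)).IsPath := by
            rw [SimpleGraph.Walk.isPath_def]
            show [x, y1, u].Nodup
            simp
            exact ⟨⟨hy1x.ne, Ne.symm hux⟩, hy1u.ne⟩
          obtain ⟨p, -, huniq⟩ := htree.existsUnique_path x u
          have := (huniq _ hp1).trans (huniq _ hp2).symm
          have hsupp : [x, z, u] = [x, y1, u] := congrArg SimpleGraph.Walk.support this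
          simp at hsupp
          exact hne hsupp
        have huleaf : IsLeaf T u := by rw [IsLeaf, hNu]; simp
        have hdist : T.dist x u = 2 := by
          have h2 : T.dist x u ≤ 2 := by
            have := SimpleGraph.dist_le
              (SimpleGraph.Walk.cons ((SimpleGraph.mem_neighborSet ..).mp hy1x)
                (SimpleGraph.Walk.cons hy1.2.symm SimpleGraph.Walk.nil))
            simpa using this
          have h0 : T.dist x u ≠ 0 := by
            have := hconn.pos_dist_of_ne (Ne.symm hux)
            omega
          have h1 : T.dist x u ≠ 1 := by
            intro h
            have hadj : T.Adj x u := SimpleGraph.dist_eq_one_iff_adj.mp h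
            exact hXnY u huX (hNxY u hadj)
          omega
        exact huB ⟨huleaf, hdist⟩
      constructor
      · have := (Set.ncard_pos (Set.toFinite _)).mpr hnonempty
        omega
      · calc (T.neighborSet u \ T.neighborSet x).ncard
            ≤ (T.neighborSet u).ncard := Set.ncard_le_ncard Set.diff_subset (Set.toFinite _)
          _ ≤ 2 := hdeg u huX
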